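/- Let H be an N×m real matrix with full row rank, s⋄ ∈ R^m arbitrary, n ∈ R^N, and y = Hs⋄ + n. Let s_r⋄ = T_r(s⋄) be a best r-term ℓ₂ approximation of s⋄. Suppose ρ_{2r,min}(H) > 1/2 and let s* be any limit of the ECME iteration s^{(p+1)} = T_r(s^{(p)} + H^T(HH^T)^{-1}(y - Hs^{(p)})). Then ‖s* - s_r⋄‖₂ ≤ 2(‖s⋄ - s_r⋄‖₂ + ‖H^T(HH^T)^{-1}n‖₂) / (√ρ_{2r,min}(H) - √(1 - ρ_{2r,min}(H))). -/

import Mathlib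

open Matrix Set

/-- Number of nonzero entries (ℓ₀ "norm"). -/
noncomputable def l0 {m : ℕ} (s : Fin m → ℝ) : ℕ := {j | s j ≠ 0}.ncard

/-- The r-sparse subspace quotient ρ_r(s, H). -/
noncomputable def ssq {N m : ℕ} (H : Matrix (Fin N) (Fin m) ℝ) (s : Fin m → ℝ) : ℝ :=
  (s ⬝ᵥ ((Hᵀ * (H * Hᵀ)⁻¹ * H) *ᵥ s)) / (s ⬝ᵥ s)

/-- The minimum r-sparse subspace quotient ρ_{r,min}(H). -/
noncomputable def minSSQ {N m : ℕ} (H : Matrix (Fin N) (Fin m) ℝ) (r : ℕ) : ℝ :=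
  sInf {x | ∃ s : Fin m → ℝ, s ≠ 0 ∧ l0 s ≤ r ∧ x = ssq H s}

/-- Euclidean (ℓ₂) norm of a vector in R^m. -/
noncomputable def l2enorm {k : ℕ} (s : Fin k → ℝ) : ℝ := Real.sqrt (∑ j, s j ^ 2)

lemma dot_self_nonneg {k : ℕ} (a : Fin k → ℝ) : 0 ≤ a ⬝ᵥ a :=
  Finset.sum_nonneg fun j _ => mul_self_nonneg _

lemma enorm_eq_sqrt_dot {k : ℕ} (a : Fin k → ℝ) : l2enorm a = Real.sqrt (a ⬝ᵥ a) := by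
  simp [l2enorm, dotProduct, sq]

lemma enorm_nonneg' {k : ℕ} (a : Fin k → ℝ) : 0 ≤ l2enorm a := Real.sqrt_nonneg _

lemma enorm_sq {k : ℕ} (a : Fin k → ℝ) : l2enorm a ^ 2 = a ⬝ᵥ a := by
  rw [enorm_eq_sqrt_dot, Real.sq_sqrt (dot_self_nonneg a)]

lemma enorm_le_enorm {k : ℕ} {a b : Fin k → ℝ} (h : a ⬝ᵥ a ≤ b ⬝ᵥ b) : l2enorm a ≤ l2enorm b := by
  rw [enorm_eq_sqrt_dot, enorm_eq_sqrt_dot]; exact Real.sqrt_le_sqrt h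

lemma dot_le_dot_of_enorm {k : ℕ} {a b : Fin k → ℝ} (h : l2enorm a ≤ l2enorm b) :
    a ⬝ᵥ a ≤ b ⬝ᵥ b := by
  have := pow_le_pow_left₀ (enorm_nonneg' a) h 2
  rwa [enorm_sq, enorm_sq] at this

lemma cauchy_schwarz {k : ℕ} (a b : Fin k → ℝ) : a ⬝ᵥ b ≤ l2enorm a * l2enorm b := by
  have h := Finset.sum_mul_sq_le_sq_mul_sq Finset.univ a b
  have ha := enorm_sq a
  have hb := enorm_sq b
  have h2 : (a ⬝ᵥ b) ^ 2 ≤ (l2enorm a * l2enorm b) ^ 2 := by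
    rw [mul_pow, ha, hb]
    simpa [dotProduct, sq] using h
  nlinarith [mul_nonneg (enorm_nonneg' a) (enorm_nonneg' b)]

lemma l2enorm_add_le {k : ℕ} (a b : Fin k → ℝ) : l2enorm (a + b) ≤ l2enorm a + l2enorm b := by
  have h1 : (a + b) ⬝ᵥ (a + b) ≤ (l2enorm a + l2enorm b) ^ 2 := by
    have hab := cauchy_schwarz a b
    have := enorm_sq a; have := enorm_sq b
    simp only [add_dotProduct, dotProduct_add]
    have hc : a ⬝ᵥ b = b ⬝ᵥ a := dotProduct_comm a b
    nlinarith
  calc l2enorm (a + b) = Real.sqrt ((a+b) ⬝ᵥ (a+b)) := enorm_eq_sqrt_dot _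
    _ ≤ Real.sqrt ((l2enorm a + l2enorm b)^2) := Real.sqrt_le_sqrt h1
    _ = l2enorm a + l2enorm b := Real.sqrt_sq (add_nonneg (enorm_nonneg' a) (enorm_nonneg' b))

lemma l0_sub_le {m : ℕ} (a b : Fin m → ℝ) : l0 (a - b) ≤ l0 a + l0 b := by
  have hsub : {j | (a - b) j ≠ 0} ⊆ {j | a j ≠ 0} ∪ {j | b j ≠ 0} := by
    intro j hj
    simp only [mem_setOf_eq, Pi.sub_apply] at hj
    by_contra hc
    simp only [mem_union, mem_setOf_eq, not_or, not_not] at hc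
    exact hj (by rw [hc.1, hc.2, sub_zero])
  calc l0 (a - b) ≤ ({j | a j ≠ 0} ∪ {j | b j ≠ 0}).ncard :=
        Set.ncard_le_ncard hsub (Set.toFinite _)
    _ ≤ l0 a + l0 b := Set.ncard_union_le _ _

lemma l0_zero_iff {m : ℕ} (a : Fin m → ℝ) : l0 a = 0 ↔ a = 0 := by
  constructor
  · intro h
    have : {j | a j ≠ 0} = ∅ := by
      rwa [← Set.ncard_eq_zero (Set.toFinite _)]
    funext j
    by_contra hj
    exact absurd (Set.eq_empty_iff_forall_notMem.mp this j) (by simpa using hj)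
  · intro h; subst h; simp [l0]

lemma gram_isUnit {N m : ℕ} (H : Matrix (Fin N) (Fin m) ℝ) (hrank : H.rank = N) :
    IsUnit (H * Hᵀ).det := by
  have h1 : (H * Hᵀ).rank = N := by rw [Matrix.rank_self_mul_transpose, hrank]
  have h2 : LinearMap.range (H * Hᵀ).mulVecLin = ⊤ := by
    apply Submodule.eq_top_of_finrank_eq
    rw [← Matrix.rank, h1]
    simp [Module.finrank_pi]
  have h3 : Function.Surjective ((H * Hᵀ).mulVec) := by
    intro v
    obtain ⟨u, hu⟩ := (LinearMap.range_eq_top.mp h2) v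
    exact ⟨u, hu⟩
  rw [← Matrix.isUnit_iff_isUnit_det]
  exact Matrix.mulVec_surjective_iff_isUnit.mp h3

section Proj
variable {N m : ℕ} (H : Matrix (Fin N) (Fin m) ℝ)

local notation "P" => Hᵀ * (H * Hᵀ)⁻¹ * H

lemma P_symm : (Hᵀ * (H * Hᵀ)⁻¹ * H)ᵀ = Hᵀ * (H * Hᵀ)⁻¹ * H := by
  have h : ((H * Hᵀ)⁻¹)ᵀ = (H * Hᵀ)⁻¹ := by
    rw [Matrix.transpose_nonsing_inv, Matrix.transpose_mul, Matrix.transpose_transpose]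
  rw [Matrix.transpose_mul, Matrix.transpose_mul, Matrix.transpose_transpose, h,
    Matrix.mul_assoc]

lemma P_idem (hdet : IsUnit (H * Hᵀ).det) :
    (Hᵀ * (H * Hᵀ)⁻¹ * H) * (Hᵀ * (H * Hᵀ)⁻¹ * H) = Hᵀ * (H * Hᵀ)⁻¹ * H := by
  have h : (H * Hᵀ)⁻¹ * (H * Hᵀ) = 1 := Matrix.nonsing_inv_mul _ hdet
  calc (Hᵀ * (H * Hᵀ)⁻¹ * H) * (Hᵀ * (H * Hᵀ)⁻¹ * H)
      = Hᵀ * (((H * Hᵀ)⁻¹ * (H * Hᵀ)) * ((H * Hᵀ)⁻¹ * H)) := by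
        simp only [Matrix.mul_assoc]
    _ = Hᵀ * (H * Hᵀ)⁻¹ * H := by rw [h, Matrix.one_mul, Matrix.mul_assoc]

lemma P_dot_symm (a : Fin m → ℝ) (b : Fin m → ℝ) :
    (P *ᵥ a) ⬝ᵥ b = a ⬝ᵥ (P *ᵥ b) := by
  rw [Matrix.dotProduct_mulVec, ← Matrix.mulVec_transpose, P_symm]

lemma P_dot_self (hdet : IsUnit (H * Hᵀ).det) (v : Fin m → ℝ) :
    (P *ᵥ v) ⬝ᵥ (P *ᵥ v) = v ⬝ᵥ (P *ᵥ v) := by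
  rw [P_dot_symm, Matrix.mulVec_mulVec, P_idem H hdet]

lemma P_dot_nonneg (hdet : IsUnit (H * Hᵀ).det) (v : Fin m → ℝ) :
    0 ≤ v ⬝ᵥ (P *ᵥ v) := by
  rw [← P_dot_self H hdet]; exact dot_self_nonneg _

lemma P_dot_le (hdet : IsUnit (H * Hᵀ).det) (v : Fin m → ℝ) :
    v ⬝ᵥ (P *ᵥ v) ≤ v ⬝ᵥ v := by
  have key : (v - P *ᵥ v) ⬝ᵥ (v - P *ᵥ v) = v ⬝ᵥ v - v ⬝ᵥ (P *ᵥ v) := by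
    simp only [dotProduct_sub, sub_dotProduct]
    rw [P_dot_self H hdet, P_dot_symm]
    ring
  nlinarith [dot_self_nonneg (v - P *ᵥ v)]

lemma P_res_sq (hdet : IsUnit (H * Hᵀ).det) (v : Fin m → ℝ) :
    l2enorm (v - P *ᵥ v) ^ 2 = v ⬝ᵥ v - v ⬝ᵥ (P *ᵥ v) := by
  rw [enorm_sq]
  simp only [dotProduct_sub, sub_dotProduct]
  rw [P_dot_self H hdet, P_dot_symm]
  ring

end Proj

lemma dot_self_pos {k : ℕ} {a : Fin k → ℝ} (h : a ≠ 0) : 0 < a ⬝ᵥ a := by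
  obtain ⟨j, hj⟩ : ∃ j, a j ≠ 0 := by
    by_contra hc; push_neg at hc; exact h (funext hc)
  have h1 : 0 < a j * a j := mul_self_pos.mpr hj
  calc (0:ℝ) < a j * a j := h1
    _ ≤ a ⬝ᵥ a :=
      Finset.single_le_sum (f := fun i => a i * a i)
        (fun i _ => mul_self_nonneg _) (Finset.mem_univ j)

set_option maxHeartbeats 1000000 in
theorem ecme_near_optimal_recovery {N m : ℕ} (H : Matrix (Fin N) (Fin m) ℝ)
    (hNm : N ≤ m) (hrank : H.rank = N) (r : ℕ)
    (sd : Fin m → ℝ) (n : Fin N → ℝ) (y : Fin N → ℝ) (hy : y = H *ᵥ sd + n)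
    (srd : Fin m → ℝ) (hsrd : l0 srd ≤ r)
    (hbest : ∀ t : Fin m → ℝ, l0 t ≤ r → l2enorm (srd - sd) ≤ l2enorm (t - sd))
    (hssq : 1 / 2 < minSSQ H (2 * r))
    (s : ℕ → Fin m → ℝ) (hs : ∀ p : ℕ, l0 (s p) ≤ r)
    (hstep : ∀ p : ℕ, ∀ t : Fin m → ℝ, l0 t ≤ r →
      l2enorm (s p + Hᵀ *ᵥ ((H * Hᵀ)⁻¹ *ᵥ (y - H *ᵥ s p)) - s (p + 1)) ≤
      l2enorm (s p + Hᵀ *ᵥ ((H * Hᵀ)⁻¹ *ᵥ (y - H *ᵥ s p)) - t))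
    (sstar : Fin m → ℝ) (hlim : Filter.Tendsto s Filter.atTop (nhds sstar)) :
    l2enorm (sstar - srd) ≤
      2 * (l2enorm (sd - srd) + l2enorm (Hᵀ *ᵥ ((H * Hᵀ)⁻¹ *ᵥ n))) /
        (Real.sqrt (minSSQ H (2 * r)) - Real.sqrt (1 - minSSQ H (2 * r))) := by
  have hdet : IsUnit (H * Hᵀ).det := gram_isUnit H hrank
  set ρ : ℝ := minSSQ H (2 * r) with hρdef
  set P : Matrix (Fin m) (Fin m) ℝ := Hᵀ * (H * Hᵀ)⁻¹ * H with hPdef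
  set w : Fin m → ℝ := Hᵀ *ᵥ ((H * Hᵀ)⁻¹ *ᵥ n) with hwdef
  set S : Set ℝ := {x | ∃ v : Fin m → ℝ, v ≠ 0 ∧ l0 v ≤ 2 * r ∧ x = ssq H v} with hSdef
  have hSlb : ∀ x ∈ S, (0:ℝ) ≤ x := by
    rintro x ⟨v, hv0, hvl0, rfl⟩
    exact div_nonneg (P_dot_nonneg H hdet v) (dot_self_nonneg v)
  have hbdd : BddBelow S := ⟨0, hSlb⟩
  have hρS : ρ = sInf S := rfl
  have hρ1 : ρ ≤ 1 := by
    by_cases hS : S.Nonempty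
    · obtain ⟨x, v, hv0, hvl0, rfl⟩ := hS
      have h1 : ρ ≤ ssq H v := csInf_le hbdd ⟨v, hv0, hvl0, rfl⟩
      have h2 : ssq H v ≤ 1 := by
        rw [ssq, div_le_one (dot_self_pos hv0)]
        exact P_dot_le H hdet v
      linarith
    · exfalso
      rw [Set.not_nonempty_iff_eq_empty] at hS
      rw [hρS, hS, Real.sInf_empty] at hssq
      linarith
  have hρhalf : 1 / 2 < ρ := hssq
  have hρ0 : 0 < ρ := by linarith
  have hρkey : ∀ v : Fin m → ℝ, l0 v ≤ 2 * r → ρ * (v ⬝ᵥ v) ≤ v ⬝ᵥ (P *ᵥ v) := by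
    intro v hv
    by_cases hv0 : v = 0
    · subst hv0; simp
    · have h1 : ρ ≤ ssq H v := csInf_le hbdd ⟨v, hv0, hv, rfl⟩
      have h2 : 0 < v ⬝ᵥ v := dot_self_pos hv0
      have := mul_le_mul_of_nonneg_right h1 h2.le
      rwa [ssq, div_mul_cancel₀ _ h2.ne'] at this
  have hres : ∀ v : Fin m → ℝ, l0 v ≤ 2 * r →
      l2enorm (v - P *ᵥ v) ≤ Real.sqrt (1 - ρ) * l2enorm v := by
    intro v hv
    have h1 : (v - P *ᵥ v) ⬝ᵥ (v - P *ᵥ v) = v ⬝ᵥ v - v ⬝ᵥ (P *ᵥ v) := by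
      have := P_res_sq H hdet v
      rw [← enorm_sq]; rw [this]
    calc l2enorm (v - P *ᵥ v) = Real.sqrt (v ⬝ᵥ v - v ⬝ᵥ (P *ᵥ v)) := by
          rw [enorm_eq_sqrt_dot, h1]
      _ ≤ Real.sqrt ((1 - ρ) * (v ⬝ᵥ v)) := by
          apply Real.sqrt_le_sqrt
          have := hρkey v hv
          nlinarith
      _ = Real.sqrt (1 - ρ) * l2enorm v := by
          rw [Real.sqrt_mul (by linarith), enorm_eq_sqrt_dot]
  have hPle : ∀ v : Fin m → ℝ, l2enorm (P *ᵥ v) ≤ l2enorm v := by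
    intro v
    apply enorm_le_enorm
    rw [P_dot_self H hdet]
    exact P_dot_le H hdet v
  have hM : P * (Hᵀ * (H * Hᵀ)⁻¹) = Hᵀ * (H * Hᵀ)⁻¹ := by
    calc P * (Hᵀ * (H * Hᵀ)⁻¹) = Hᵀ * ((H * Hᵀ)⁻¹ * ((H * Hᵀ) * (H * Hᵀ)⁻¹)) := by
          rw [hPdef]; simp only [Matrix.mul_assoc]
      _ = Hᵀ * (H * Hᵀ)⁻¹ := by
          rw [Matrix.mul_nonsing_inv _ hdet, Matrix.mul_one]
  have hPw : P *ᵥ w = w := by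
    rw [hwdef]
    simp only [Matrix.mulVec_mulVec]
    rw [hM]
  have hexp : ∀ A v : Fin m → ℝ, (A - v) ⬝ᵥ (A - v) = A ⬝ᵥ A - 2 * (A ⬝ᵥ v) + v ⬝ᵥ v := by
    intro A v
    simp only [dotProduct_sub, sub_dotProduct]
    rw [dotProduct_comm v A]
    ring
  set B : ℝ := l2enorm (sd - srd) + l2enorm w with hBdef
  have hB0 : 0 ≤ B := add_nonneg (enorm_nonneg' _) (enorm_nonneg' _)
  -- one-step bound
  have hstep2 : ∀ p : ℕ, l2enorm (s (p+1) - srd) ≤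
      (2 * (1 - ρ)) * l2enorm (s p - srd) + 2 * B := by
    intro p
    set u : Fin m → ℝ := s p + Hᵀ *ᵥ ((H * Hᵀ)⁻¹ *ᵥ (y - H *ᵥ s p)) with hudef
    set ep : Fin m → ℝ := s p - srd with hepdef
    set vv : Fin m → ℝ := s (p+1) - srd with hvvdef
    clear_value u ep vv
    have hepl0 : l0 ep ≤ 2 * r := by
      have h := l0_sub_le (s p) srd
      rw [← hepdef] at h
      have := hs p
      omega
    have hvvl0 : l0 vv ≤ 2 * r := by
      have h := l0_sub_le (s (p+1)) srd
      rw [← hvvdef] at h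
      have := hs (p+1)
      omega
    have hA : u - srd = (ep - P *ᵥ ep) + (P *ᵥ (sd - srd) + w) := by
      have hyy : y - H *ᵥ s p = H *ᵥ (sd - s p) + n := by
        rw [hy, Matrix.mulVec_sub]; abel
      rw [hudef, hyy, hepdef]
      simp only [Matrix.mulVec_add, Matrix.mulVec_sub, Matrix.mulVec_mulVec]
      rw [show Hᵀ * ((H * Hᵀ)⁻¹ * H) = P from by rw [hPdef, Matrix.mul_assoc],
        show (Hᵀ * (H * Hᵀ)⁻¹) *ᵥ n = w from by rw [hwdef, Matrix.mulVec_mulVec]]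
      abel
    have h1 : l2enorm (u - s (p+1)) ≤ l2enorm (u - srd) := by
      have := hstep p srd hsrd
      rwa [← hudef] at this
    have h1' : u - s (p + 1) = (u - srd) - vv := by rw [hvvdef]; abel
    have h2 : vv ⬝ᵥ vv ≤ 2 * ((u - srd) ⬝ᵥ vv) := by
      have hd := dot_le_dot_of_enorm h1
      rw [h1', hexp (u - srd) vv] at hd
      linarith
    have h3 : (u - srd) ⬝ᵥ vv
        = (ep - P *ᵥ ep) ⬝ᵥ (vv - P *ᵥ vv) + (sd - srd + w) ⬝ᵥ (P *ᵥ vv) := by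
      rw [hA, add_dotProduct]
      congr 1
      · have hz : (ep - P *ᵥ ep) ⬝ᵥ (P *ᵥ vv) = 0 := by
          rw [sub_dotProduct, P_dot_symm, Matrix.mulVec_mulVec, P_idem H hdet, sub_self]
        conv_rhs => rw [dotProduct_sub]
        rw [hz, sub_zero]
      · rw [← hPw, ← Matrix.mulVec_add, P_dot_symm, hPw]
    have hT1 : (ep - P *ᵥ ep) ⬝ᵥ (vv - P *ᵥ vv) ≤ (1 - ρ) * (l2enorm ep * l2enorm vv) := by
      calc (ep - P *ᵥ ep) ⬝ᵥ (vv - P *ᵥ vv)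
          ≤ l2enorm (ep - P *ᵥ ep) * l2enorm (vv - P *ᵥ vv) := cauchy_schwarz _ _
        _ ≤ (Real.sqrt (1 - ρ) * l2enorm ep) * (Real.sqrt (1 - ρ) * l2enorm vv) :=
            mul_le_mul (hres ep hepl0) (hres vv hvvl0) (enorm_nonneg' _)
              (mul_nonneg (Real.sqrt_nonneg _) (enorm_nonneg' _))
        _ = (Real.sqrt (1 - ρ) * Real.sqrt (1 - ρ)) * (l2enorm ep * l2enorm vv) := by ring
        _ = (1 - ρ) * (l2enorm ep * l2enorm vv) := by
            rw [Real.mul_self_sqrt (by linarith)]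
    have hT2 : (sd - srd + w) ⬝ᵥ (P *ᵥ vv) ≤ B * l2enorm vv := by
      calc (sd - srd + w) ⬝ᵥ (P *ᵥ vv)
          ≤ l2enorm (sd - srd + w) * l2enorm (P *ᵥ vv) := cauchy_schwarz _ _
        _ ≤ B * l2enorm vv :=
            mul_le_mul (l2enorm_add_le _ _) (hPle vv) (enorm_nonneg' _) hB0
    have h4 : l2enorm vv ^ 2 ≤ ((2 * (1 - ρ)) * l2enorm ep + 2 * B) * l2enorm vv := by
      rw [enorm_sq]
      calc vv ⬝ᵥ vv ≤ 2 * ((u - srd) ⬝ᵥ vv) := h2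
        _ = 2 * ((ep - P *ᵥ ep) ⬝ᵥ (vv - P *ᵥ vv)) + 2 * ((sd - srd + w) ⬝ᵥ (P *ᵥ vv)) := by
            rw [h3]; ring
        _ ≤ 2 * ((1 - ρ) * (l2enorm ep * l2enorm vv)) + 2 * (B * l2enorm vv) := by linarith
        _ = ((2 * (1 - ρ)) * l2enorm ep + 2 * B) * l2enorm vv := by ring
    rcases eq_or_lt_of_le (enorm_nonneg' vv) with h0 | h0
    · rw [← h0]
      have h5 : 0 ≤ (2 * (1 - ρ)) * l2enorm ep := by
        apply mul_nonneg (by linarith) (enorm_nonneg' _)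
      linarith
    · rw [sq] at h4
      exact le_of_mul_le_mul_right h4 h0
  -- pass to the limit
  set L : ℝ := l2enorm (sstar - srd) with hLdef
  have hcont : Continuous fun x : Fin m → ℝ => l2enorm (x - srd) := by
    unfold l2enorm
    apply Real.continuous_sqrt.comp
    apply continuous_finset_sum
    intro j _
    simp only [Pi.sub_apply]
    exact ((continuous_apply j).sub continuous_const).pow 2
  have hf : Filter.Tendsto (fun p => l2enorm (s p - srd)) Filter.atTop (nhds L) := by
    rw [hLdef]
    have h := Filter.Tendsto.comp (hcont.tendsto sstar) hlim
    exact h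
  have hf1 : Filter.Tendsto (fun p => l2enorm (s (p+1) - srd)) Filter.atTop (nhds L) :=
    hf.comp (Filter.tendsto_add_atTop_nat 1)
  have hg : Filter.Tendsto (fun p => (2 * (1 - ρ)) * l2enorm (s p - srd) + 2 * B)
      Filter.atTop (nhds ((2 * (1 - ρ)) * L + 2 * B)) :=
    (hf.const_mul _).add_const _
  have hL : L ≤ (2 * (1 - ρ)) * L + 2 * B :=
    le_of_tendsto_of_tendsto' hf1 hg hstep2
  have hL0 : 0 ≤ L := enorm_nonneg' _
  -- final algebra
  set a : ℝ := Real.sqrt ρ with hadef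
  set b : ℝ := Real.sqrt (1 - ρ) with hbdef
  have ha2 : a ^ 2 = ρ := Real.sq_sqrt hρ0.le
  have hb2 : b ^ 2 = 1 - ρ := Real.sq_sqrt (by linarith)
  have ha0 : 0 ≤ a := Real.sqrt_nonneg _
  have hb0 : 0 ≤ b := Real.sqrt_nonneg _
  have hba : b < a := Real.sqrt_lt_sqrt (by linarith) (by linarith)
  have hab1 : 1 ≤ a + b := by nlinarith [mul_nonneg ha0 hb0, ha2, hb2, add_nonneg ha0 hb0]
  have key : L * (2 * ρ - 1) ≤ 2 * B := by nlinarith [hL]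
  rw [le_div_iff₀ (by linarith : (0:ℝ) < a - b)]
  have h6 : L * (a - b) ≤ L * (a - b) * (a + b) :=
    le_mul_of_one_le_right (mul_nonneg hL0 (sub_nonneg.mpr hba.le)) hab1
  have h7 : L * (a - b) * (a + b) = L * (2 * ρ - 1) := by
    have : L * (a - b) * (a + b) = L * (a ^ 2 - b ^ 2) := by ring
    rw [this, ha2, hb2]; ring
  linarith
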